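/- Let r ≥ 1, let λ_1 ≥ … ≥ λ_r ≥ 0 and μ_1 ≥ … ≥ μ_r ≥ 0 be integers with μ_i ≤ λ_i for all i, and let f = (f_1,…,f_r), g = (g_1,…,g_r) be r-tuples of positive integers. If for every pair (i,j) with 1 ≤ i,j ≤ r such that f_i < g_j − 1 one has f_i + λ_i − i ≥ g_j + μ_j − j, then G_{λ/μ,f/g}(x) = G_{λ/μ,[[f/g]]}(x). -/

import Mathlib

/- Common setup: `Rx = ℂ[x₁,x₂,…]`, `Lz = Rx((z))`, and `Rg = 𝓡 = Rx((z))[[β]]`. -/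

noncomputable section

/-- The polynomial ring `R = ℂ[x_1, x_2, …]`. -/
abbrev Rx : Type := MvPolynomial ℕ ℂ

/-- Formal Laurent series in `z` over `R`. -/
abbrev Lz : Type := LaurentSeries Rx

/-- The ring `𝓡 = R((z))[[β]]`: formal power series in `β` with coefficients in `R((z))`. -/
abbrev Rg : Type := PowerSeries Lz

/-- The variable `x_k` (for `k ≥ 1`), viewed in `𝓡`. -/
def xc (k : ℤ) : Rg := PowerSeries.C (R := Lz) (HahnSeries.C (MvPolynomial.X k.toNat))

/-- The variable `z`, viewed in `𝓡`. -/
def zz : Rg := PowerSeries.C (R := Lz) (HahnSeries.single 1 1)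

/-- The element `z⁻¹`, viewed in `𝓡`. -/
def zinv : Rg := PowerSeries.C (R := Lz) (HahnSeries.single (-1) 1)

/-- The variable `β` of `𝓡`. -/
def βv : Rg := PowerSeries.X

/-- The unit `u = 1 + β z⁻¹` of `𝓡`. -/
def uu : Rg := 1 + βv * zinv

/-- Integer powers of a ring element, using `Ring.inverse` for negative exponents. -/
def zpow' {A : Type} [CommRing A] (a : A) (m : ℤ) : A :=
  if 0 ≤ m then a ^ m.toNat else Ring.inverse a ^ (-m).toNat

/-- The signed product `∏_{k=q}^{p} c k`:  equal to `c q ⋯ c p` if `p ≥ q`, to `1` if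
`p = q - 1`, and to `(c (p+1) ⋯ c (q-1))⁻¹` if `p < q - 1`. -/
def sProd' {A : Type} [CommRing A] (c : ℤ → A) (q p : ℤ) : A :=
  if q ≤ p + 1 then ∏ k ∈ Finset.Icc q p, c k
  else Ring.inverse (∏ k ∈ Finset.Icc (p + 1) (q - 1), c k)

/-- The generating series `Σ_{n∈ℤ} G_n^{[[p/q]]}(x) zⁿ
  = (1+βz⁻¹)⁻¹ ∏_{k=q}^{p} (1+βx_k)(1-x_k z)⁻¹ ∈ 𝓡` (signed product convention). -/
def GGser (p q : ℤ) : Rg :=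
  Ring.inverse uu * sProd' (fun k => (1 + βv * xc k) * Ring.inverse (1 - xc k * zz)) q p

/-- The generating series `Σ_{n∈ℤ} G_n^{[p/q]}(x) zⁿ ∈ 𝓡`,
  where the product is declared to be `1` whenever `p < q`. -/
def Gunser (p q : ℤ) : Rg :=
  Ring.inverse uu *
    (if q ≤ p then ∏ k ∈ Finset.Icc q p, (1 + βv * xc k) * Ring.inverse (1 - xc k * zz) else 1)

/-- The coefficient of `zⁿ` of an element of `𝓡`, read off coefficientwise in `β`;
  it is an element of `R[[β]]`. -/
def coeffZ (n : ℤ) (F : Rg) : PowerSeries Rx :=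
  PowerSeries.mk fun m => ((PowerSeries.coeff (R := Lz) m) F).coeff n

/-- `G_n^{[[p/q]]}(x) ∈ R[[β]]`. -/
def Gbb (p q n : ℤ) : PowerSeries Rx := coeffZ n (GGser p q)

/-- `G_n^{[p/q]}(x) ∈ R[[β]]`. -/
def Gun (p q n : ℤ) : PowerSeries Rx := coeffZ n (Gunser p q)

/-- The β-adically convergent sum `Σ_{s=0}^{∞} C(c,s) βˢ · G (d + s) ∈ R[[β]]`, where
  `C(c,s)` is the generalized binomial coefficient `Ring.choose` of the integer `c`. -/
def betaSum (c : ℤ) (G : ℤ → PowerSeries Rx) (d : ℤ) : PowerSeries Rx :=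
  PowerSeries.mk fun m => ∑ s ∈ Finset.range (m + 1),
    ((Ring.choose c s : ℤ) : Rx) * (PowerSeries.coeff (R := Rx) (m - s)) (G (d + s))

end

noncomputable section

/-- `G_{λ/μ,[[f/g]]}(x) = det(Σ_{s≥0} C(i-j,s) βˢ G^{[[f_i/g_j]]}_{λ_i-μ_j-i+j+s}(x))_{1≤i,j≤r}`,
with `0`-based `Fin r` indices (the paper's index `i` is `(i : ℕ) + 1`). -/
def GdetBB (r : ℕ) (lam mu f g : Fin r → ℤ) : PowerSeries Rx :=
  Matrix.det (Matrix.of fun i j : Fin r =>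
    betaSum (((i : ℕ) : ℤ) - ((j : ℕ) : ℤ)) (fun n => Gbb (f i) (g j) n)
      (lam i - mu j - (((i : ℕ) : ℤ) + 1) + (((j : ℕ) : ℤ) + 1)))

/-- `G_{λ/μ,f/g}(x) = det(Σ_{s≥0} C(i-j,s) βˢ G^{[f_i/g_j]}_{λ_i-μ_j-i+j+s}(x))_{1≤i,j≤r}`,
with `0`-based `Fin r` indices (the paper's index `i` is `(i : ℕ) + 1`). -/
def GdetUn (r : ℕ) (lam mu f g : Fin r → ℤ) : PowerSeries Rx :=
  Matrix.det (Matrix.of fun i j : Fin r =>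
    betaSum (((i : ℕ) : ℤ) - ((j : ℕ) : ℤ)) (fun n => Gun (f i) (g j) n)
      (lam i - mu j - (((i : ℕ) : ℤ) + 1) + (((j : ℕ) : ℤ) + 1)))

end

/-! ### Auxiliary lemmas -/

noncomputable section AuxProof

open PowerSeries

/-- In a commutative ring, if `a * b = 1` then `Ring.inverse a = b`. -/
lemma ringInverse_eq_of_mul_eq_one {A : Type} [CommRing A] {a b : A} (h : a * b = 1) :
    Ring.inverse a = b := by
  have ha : IsUnit a := IsUnit.of_mul_eq_one b h
  calc Ring.inverse a = Ring.inverse a * (a * b) := by rw [h, mul_one]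
    _ = b := by rw [← mul_assoc, Ring.inverse_mul_cancel _ ha, one_mul]

/-- Geometric series inverse: `(1 + X·C a) · Σ (-a)^m X^m = 1`. -/
lemma geom_mul {A : Type} [CommRing A] (a : A) :
    (1 + PowerSeries.X * PowerSeries.C (R := A) a) * PowerSeries.mk (fun m => (-a) ^ m) = 1 := by
  have : (1 + PowerSeries.X * PowerSeries.C (R := A) a) * PowerSeries.mk (fun m => (-a) ^ m)
      = PowerSeries.mk (fun m => (-a) ^ m)
        + PowerSeries.X * (PowerSeries.C (R := A) a * PowerSeries.mk (fun m => (-a) ^ m)) := by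
    ring
  rw [this]
  ext m
  cases m with
  | zero =>
      simp [PowerSeries.coeff_mk]
  | succ k =>
      simp only [map_add, PowerSeries.coeff_mk, PowerSeries.coeff_succ_X_mul,
        PowerSeries.coeff_C_mul, PowerSeries.coeff_one, Nat.succ_ne_zero, if_false]
      rw [pow_succ']
      ring

/-- Support bound predicate for Laurent series: all coefficients beyond `N` vanish. -/
def HSb (N : ℤ) (φ : Lz) : Prop := ∀ n : ℤ, N < n → φ.coeff n = 0

lemma HSb_mono {N M : ℤ} {φ : Lz} (h : HSb N φ) (hNM : N ≤ M) : HSb M φ :=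
  fun n hn => h n (lt_of_le_of_lt hNM hn)

lemma HSb_mul {N M : ℤ} {φ ψ : Lz} (hφ : HSb N φ) (hψ : HSb M ψ) : HSb (N + M) (φ * ψ) := by
  intro n hn
  by_contra hc
  have hmem : n ∈ (φ * ψ).support := (HahnSeries.mem_support _ _).2 hc
  obtain ⟨i, hi, j, hj, rfl⟩ := HahnSeries.support_mul_subset hmem
  have hiN : i ≤ N := by
    by_contra hiN
    exact ((HahnSeries.mem_support _ _).1 hi) (hφ i (lt_of_not_ge hiN))
  have hjM : j ≤ M := by
    by_contra hjM
    exact ((HahnSeries.mem_support _ _).1 hj) (hψ j (lt_of_not_ge hjM))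
  exact (not_lt.2 (add_le_add hiN hjM)) hn

lemma HSb_one : HSb 0 (1 : Lz) := by
  intro n hn
  rw [HahnSeries.coeff_one, if_neg (by omega)]

lemma HSb_single {N a : ℤ} (r : Rx) (h : a ≤ N) : HSb N (HahnSeries.single a r) := by
  intro n hn
  exact HahnSeries.coeff_single_of_ne (by omega)

lemma HSb_neg {N : ℤ} {φ : Lz} (h : HSb N φ) : HSb N (-φ) := by
  intro n hn
  rw [HahnSeries.coeff_neg, h n hn, neg_zero]

lemma HSb_sub {N : ℤ} {φ ψ : Lz} (hφ : HSb N φ) (hψ : HSb N ψ) : HSb N (φ - ψ) := by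
  intro n hn
  rw [HahnSeries.coeff_sub, hφ n hn, hψ n hn, sub_zero]

lemma HSb_pow {φ : Lz} (h : HSb 0 φ) (m : ℕ) : HSb 0 (φ ^ m) := by
  induction m with
  | zero => simpa using HSb_one
  | succ k ih =>
      rw [pow_succ]
      simpa using HSb_mul ih h

/-- Support bound predicate for elements of `𝓡`, uniform in the `β`-degree. -/
def Pb (N : ℤ) (F : Rg) : Prop := ∀ m : ℕ, HSb N ((PowerSeries.coeff (R := Lz) m) F)

lemma Pb_mono {N M : ℤ} {F : Rg} (h : Pb N F) (hNM : N ≤ M) : Pb M F :=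
  fun m => HSb_mono (h m) hNM

lemma Pb_mul {N M : ℤ} {F G : Rg} (hF : Pb N F) (hG : Pb M G) : Pb (N + M) (F * G) := by
  intro m n hn
  rw [PowerSeries.coeff_mul]
  have : ((∑ p ∈ Finset.HasAntidiagonal.antidiagonal m,
      (PowerSeries.coeff (R := Lz) p.1) F * (PowerSeries.coeff (R := Lz) p.2) G).coeff n)
      = ∑ p ∈ Finset.HasAntidiagonal.antidiagonal m,
        ((PowerSeries.coeff (R := Lz) p.1) F * (PowerSeries.coeff (R := Lz) p.2) G).coeff n := by
    induction (Finset.HasAntidiagonal.antidiagonal m) using Finset.cons_induction with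
    | empty => simp [HahnSeries.coeff_zero]
    | cons a s ha ih => rw [Finset.sum_cons, Finset.sum_cons, HahnSeries.coeff_add, ih]
  rw [this]
  apply Finset.sum_eq_zero
  intro p _
  exact HSb_mul (hF p.1) (hG p.2) n hn

lemma Pb_C {N : ℤ} {b : Lz} (h : HSb N b) (hN : 0 ≤ N) : Pb N (PowerSeries.C (R := Lz) b) := by
  intro m n hn
  rw [PowerSeries.coeff_C]
  split
  · exact h n hn
  · exact HahnSeries.coeff_zero

lemma Pb_mk {N : ℤ} {f : ℕ → Lz} (h : ∀ m, HSb N (f m)) : Pb N (PowerSeries.mk f) := by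
  intro m
  rw [PowerSeries.coeff_mk]
  exact h m

lemma Pb_prod {s : Finset ℤ} {G : ℤ → Rg} (h : ∀ k ∈ s, Pb 1 (G k)) :
    Pb (s.card : ℤ) (∏ k ∈ s, G k) := by
  induction s using Finset.cons_induction with
  | empty =>
      simp only [Finset.prod_empty, Finset.card_empty, Nat.cast_zero]
      intro m n hn
      rw [PowerSeries.coeff_one]
      split
      · exact HSb_one n hn
      · exact HahnSeries.coeff_zero
  | cons a s ha ih =>
      rw [Finset.prod_cons, Finset.card_cons]
      have h1 : Pb 1 (G a) := h a (Finset.mem_cons_self a s)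
      have h2 : Pb (s.card : ℤ) (∏ k ∈ s, G k) :=
        ih (fun k hk => h k (Finset.mem_cons_of_mem hk))
      have := Pb_mul h1 h2
      convert this using 2
      push_cast
      ring

/-! ### Explicit inverses -/

lemma uu_eq : uu = 1 + PowerSeries.X * PowerSeries.C (R := Lz) (HahnSeries.single (-1) 1) := rfl

lemma inv_uu :
    Ring.inverse uu = PowerSeries.mk (fun m => (-(HahnSeries.single (-1) 1 : Lz)) ^ m) := by
  rw [uu_eq]
  exact ringInverse_eq_of_mul_eq_one (geom_mul _)

lemma Pb_inv_uu : Pb 0 (Ring.inverse uu) := by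
  rw [inv_uu]
  exact Pb_mk (fun m => HSb_pow (HSb_neg (HSb_single 1 (by omega))) m)

lemma one_add_beta_xc_eq (k : ℤ) :
    1 + βv * xc k
      = 1 + PowerSeries.X * PowerSeries.C (R := Lz) (HahnSeries.C (MvPolynomial.X k.toNat)) := rfl

lemma isUnit_one_add_beta_xc (k : ℤ) : IsUnit (1 + βv * xc k) := by
  rw [one_add_beta_xc_eq]
  exact IsUnit.of_mul_eq_one _ (geom_mul _)

lemma inv_one_add_beta_xc (k : ℤ) :
    Ring.inverse (1 + βv * xc k)
      = PowerSeries.mk (fun m => (-(HahnSeries.C (MvPolynomial.X k.toNat) : Lz)) ^ m) := by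
  rw [one_add_beta_xc_eq]
  exact ringInverse_eq_of_mul_eq_one (geom_mul _)

lemma Pb_inv_one_add_beta_xc (k : ℤ) : Pb 0 (Ring.inverse (1 + βv * xc k)) := by
  rw [inv_one_add_beta_xc]
  refine Pb_mk (fun m => HSb_pow ?_ m)
  exact HSb_neg (HSb_single _ (le_refl 0))

/-- `1 - x_k z` as the image of a Laurent series. -/
lemma one_sub_xc_zz_eq (k : ℤ) :
    1 - xc k * zz = PowerSeries.C (R := Lz)
      (1 - HahnSeries.C (MvPolynomial.X k.toNat) * HahnSeries.single 1 1) := by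
  rw [map_sub, map_one, map_mul]
  rfl

lemma isUnit_one_sub_xc_zz (k : ℤ) : IsUnit (1 - xc k * zz) := by
  rw [one_sub_xc_zz_eq]
  apply IsUnit.map
  -- show the Laurent series `1 - C x * single 1 1` is a unit
  have h : ((1 : PowerSeries Rx) + PowerSeries.X * PowerSeries.C (R := Rx) (-(MvPolynomial.X k.toNat)))
      * PowerSeries.mk (fun m => (-(-(MvPolynomial.X k.toNat : Rx))) ^ m) = 1 := geom_mul _
  have h2 : IsUnit ((1 : PowerSeries Rx)
      + PowerSeries.X * PowerSeries.C (R := Rx) (-(MvPolynomial.X k.toNat))) :=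
    IsUnit.of_mul_eq_one _ h
  have h3 := h2.map (HahnSeries.ofPowerSeries ℤ Rx)
  have h4 : (HahnSeries.ofPowerSeries ℤ Rx)
      ((1 : PowerSeries Rx) + PowerSeries.X * PowerSeries.C (R := Rx) (-(MvPolynomial.X k.toNat)))
      = 1 - HahnSeries.C (MvPolynomial.X k.toNat) * HahnSeries.single 1 1 := by
    rw [map_add, map_one, map_mul, HahnSeries.ofPowerSeries_X, HahnSeries.ofPowerSeries_C,
      map_neg]
    ring
  rwa [h4] at h3

lemma Pb_one_sub_xc_zz (k : ℤ) : Pb 1 (1 - xc k * zz) := by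
  rw [one_sub_xc_zz_eq]
  refine Pb_C ?_ (by omega)
  refine HSb_sub (HSb_mono HSb_one (by omega)) ?_
  have := HSb_mul (N := 0) (M := 1)
    (HSb_single (a := 0) (MvPolynomial.X k.toNat) (le_refl 0)) (HSb_single (a := 1) 1 (le_refl 1))
  simpa using this

/-- The factor in the signed product and its explicit inverse. -/
lemma factor_mul_inv (k : ℤ) :
    ((1 + βv * xc k) * Ring.inverse (1 - xc k * zz))
      * ((1 - xc k * zz) * Ring.inverse (1 + βv * xc k)) = 1 := by
  have h1 := Ring.mul_inverse_cancel _ (isUnit_one_add_beta_xc k)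
  have h2 := Ring.mul_inverse_cancel _ (isUnit_one_sub_xc_zz k)
  calc ((1 + βv * xc k) * Ring.inverse (1 - xc k * zz))
        * ((1 - xc k * zz) * Ring.inverse (1 + βv * xc k))
      = ((1 + βv * xc k) * Ring.inverse (1 + βv * xc k))
        * ((1 - xc k * zz) * Ring.inverse (1 - xc k * zz)) := by ring
    _ = 1 := by rw [h1, h2, one_mul]

lemma Pb_Gfac (k : ℤ) : Pb 1 ((1 - xc k * zz) * Ring.inverse (1 + βv * xc k)) := by
  have := Pb_mul (Pb_one_sub_xc_zz k) (Pb_inv_one_add_beta_xc k)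
  simpa using this

/-! ### The key vanishing and agreement lemmas -/

lemma Pb_GGser {p q : ℤ} (h : p + 2 ≤ q) : Pb (q - 1 - p) (GGser p q) := by
  unfold GGser sProd'
  rw [if_neg (by omega)]
  have hinv : Ring.inverse (∏ k ∈ Finset.Icc (p + 1) (q - 1),
        (1 + βv * xc k) * Ring.inverse (1 - xc k * zz))
      = ∏ k ∈ Finset.Icc (p + 1) (q - 1),
        (1 - xc k * zz) * Ring.inverse (1 + βv * xc k) := by
    apply ringInverse_eq_of_mul_eq_one
    rw [← Finset.prod_mul_distrib]
    rw [Finset.prod_congr rfl (fun k _ => factor_mul_inv k), Finset.prod_const_one]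
  rw [hinv]
  have hcard : (((Finset.Icc (p + 1) (q - 1)).card : ℕ) : ℤ) = q - 1 - p := by
    rw [Int.card_Icc]
    omega
  have hprod : Pb (q - 1 - p) (∏ k ∈ Finset.Icc (p + 1) (q - 1),
      (1 - xc k * zz) * Ring.inverse (1 + βv * xc k)) := by
    rw [← hcard]
    exact Pb_prod (fun k _ => Pb_Gfac k)
  have := Pb_mul Pb_inv_uu hprod
  simpa using this

lemma Gbb_eq_zero {p q n : ℤ} (h : p + 2 ≤ q) (hn : q - p ≤ n) : Gbb p q n = 0 := by
  unfold Gbb coeffZ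
  refine PowerSeries.ext fun m => ?_
  rw [PowerSeries.coeff_mk, map_zero]
  exact Pb_GGser h m n (by omega)

lemma Gun_eq_zero {p q n : ℤ} (h : ¬ q ≤ p) (hn : 1 ≤ n) : Gun p q n = 0 := by
  unfold Gun coeffZ Gunser
  rw [if_neg h, mul_one]
  refine PowerSeries.ext fun m => ?_
  rw [PowerSeries.coeff_mk, map_zero]
  exact Pb_inv_uu m n (by omega)

lemma Gunser_eq_GGser {p q : ℤ} (h : q ≤ p + 1) : Gunser p q = GGser p q := by
  unfold Gunser GGser sProd'
  rw [if_pos h]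
  by_cases hqp : q ≤ p
  · rw [if_pos hqp]
  · rw [if_neg hqp, Finset.Icc_eq_empty (by omega), Finset.prod_empty]

lemma Gun_eq_Gbb {p q : ℤ} (h : q ≤ p + 1) (n : ℤ) : Gun p q n = Gbb p q n := by
  unfold Gun Gbb
  rw [Gunser_eq_GGser h]

end AuxProof

/-- if for every pair `(i,j)` with `f_i < g_j - 1` one has
`f_i + λ_i - i ≥ g_j + μ_j - j` (with the paper's `1`-based indices `i = (i:ℕ)+1`),
then `G_{λ/μ,f/g}(x) = G_{λ/μ,[[f/g]]}(x)`. -/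
theorem stmt6 (r : ℕ) (hr : 1 ≤ r) (lam mu f g : Fin r → ℤ)
    (hlam : Antitone lam) (hlam0 : ∀ i, 0 ≤ lam i)
    (hmu : Antitone mu) (hmu0 : ∀ i, 0 ≤ mu i)
    (hml : ∀ i, mu i ≤ lam i) (hf : ∀ i, 1 ≤ f i) (hg : ∀ i, 1 ≤ g i)
    (hcond : ∀ i j : Fin r, f i < g j - 1 →
      g j + mu j - (((j : ℕ) : ℤ) + 1) ≤ f i + lam i - (((i : ℕ) : ℤ) + 1)) :
    GdetUn r lam mu f g = GdetBB r lam mu f g := by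
  unfold GdetUn GdetBB
  apply congrArg Matrix.det
  refine Matrix.ext fun i j => ?_
  simp only [Matrix.of_apply]
  by_cases hb : f i < g j - 1
  · unfold betaSum
    refine congrArg PowerSeries.mk (funext fun m => ?_)
    apply Finset.sum_congr rfl
    intro s hs
    have hd : g j - f i ≤ lam i - mu j - (((i : ℕ) : ℤ) + 1) + (((j : ℕ) : ℤ) + 1) := by
      have := hcond i j hb
      linarith
    have hs0 : (0 : ℤ) ≤ (s : ℤ) := Int.natCast_nonneg s
    beta_reduce
    rw [Gun_eq_zero (p := f i) (q := g j) (by omega) (by linarith),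
      Gbb_eq_zero (p := f i) (q := g j) (by omega) (by linarith)]
  · have he : ∀ n, Gun (f i) (g j) n = Gbb (f i) (g j) n := Gun_eq_Gbb (by omega)
    unfold betaSum
    refine congrArg PowerSeries.mk (funext fun m => ?_)
    exact Finset.sum_congr rfl (fun s _ => by beta_reduce; rw [he])
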